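/- arXiv:2003.02103 — 7 statements merged into one kernel-verified Lean document; each statement's English description precedes it below -/
import Mathlib

section
/- Let B_1, ..., B_m be orthonormal bases of a finite-dimensional complex Hilbert space H of dimension d. Suppose the transition graph G on the disjoint union of these bases (where two basis vectors from different or same bases are adjacent iff they are non-orthogonal) is connected. If a linear operator M on H is diagonal with respect to each basis B_x (i.e., every vector in every B_x is an eigenvector of M), then M is a scalar multiple of the identity. -/
open scoped InnerProductSpace

theorem stmt_3 (d m : ℕ) (hd : 0 < d)
    (B : Fin m → OrthonormalBasis (Fin d) ℂ (EuclideanSpace ℂ (Fin d)))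
    (G : SimpleGraph (Fin m × Fin d))
    (hG : ∀ v w, G.Adj v w ↔ v ≠ w ∧ ⟪B v.1 v.2, B w.1 w.2⟫_ℂ ≠ 0)
    (hconn : G.Connected)
    (M : Matrix (Fin d) (Fin d) ℂ)
    (hM : ∀ x k, ∃ c : ℂ, M.mulVec (fun i => B x k i) = c • (fun i => B x k i)) :
    ∃ c : ℂ, M = c • (1 : Matrix (Fin d) (Fin d) ℂ) := by
  classical
  -- eigenvalue function
  choose cf hcf using hM
  set f : Fin m × Fin d → ℂ := fun p => cf p.1 p.2 with hf
  -- eigen equation in EuclideanSpace form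
  have heig : ∀ x k, M.mulVecLin (B x k) = cf x k • (B x k : EuclideanSpace ℂ (Fin d)) := by
    intro x k
    have := hcf x k
    simpa [Matrix.mulVecLin_apply] using this
  -- nonzero inner product gives equal eigenvalues
  have hkey : ∀ (x y : Fin m) (k l : Fin d),
      ⟪B x k, B y l⟫_ℂ ≠ 0 → cf x k = cf y l := by
    intro x y k l hne
    set v : EuclideanSpace ℂ (Fin d) := B y l with hv
    have hexp : v = ∑ j, (B x).repr v j • B x j := ((B x).sum_repr v).symm
    have h1 : M.mulVecLin v = ∑ j, ((B x).repr v j * cf x j) • B x j := by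
      conv_lhs => rw [hexp]
      rw [WithLp.ofLp_sum, map_sum, WithLp.ofLp_sum]
      refine Finset.sum_congr rfl fun j _ => ?_
      rw [WithLp.ofLp_smul, map_smul, heig, smul_smul, WithLp.ofLp_smul]
    have h2 : M.mulVecLin v = cf y l • v := heig y l
    have h3 : ⟪B x k, WithLp.toLp 2 (M.mulVecLin v)⟫_ℂ = (B x).repr v k * cf x k := by
      rw [h1, WithLp.toLp_ofLp]
      exact (B x).orthonormal.inner_right_fintype _ k
    have h4 : ⟪B x k, WithLp.toLp 2 (M.mulVecLin v)⟫_ℂ = cf y l * (B x).repr v k := by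
      rw [h2, WithLp.toLp_smul, WithLp.toLp_ofLp, inner_smul_right, (B x).repr_apply_apply]
    have hr : (B x).repr v k ≠ 0 := by
      rw [(B x).repr_apply_apply]; exact hne
    have h5 : (B x).repr v k * cf x k = cf y l * (B x).repr v k := h3 ▸ h4
    have h6 : (B x).repr v k * (cf x k - cf y l) = 0 := by linear_combination h5
    rcases mul_eq_zero.mp h6 with h | h
    · exact absurd h hr
    · exact sub_eq_zero.mp h
  -- adjacency gives equal f
  have hadj : ∀ v w : Fin m × Fin d, G.Adj v w → f v = f w := by
    intro v w h
    rw [hG] at h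
    exact hkey _ _ _ _ h.2
  -- connectivity gives f constant
  have hconst : ∀ v w : Fin m × Fin d, f v = f w := by
    intro v w
    obtain ⟨p⟩ := hconn.preconnected v w
    induction p with
    | nil => rfl
    | cons h p ih => exact (hadj _ _ h).trans ih
  -- conclude
  have hm : 0 < m := by
    obtain ⟨v⟩ := hconn.nonempty
    exact v.1.pos
  set x0 : Fin m := ⟨0, hm⟩
  refine ⟨cf x0 ⟨0, hd⟩, ?_⟩
  apply Matrix.toLin'.injective
  apply Module.Basis.ext ((B x0).toBasis.map (WithLp.linearEquiv 2 ℂ (Fin d → ℂ)))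
  intro k
  rw [Module.Basis.map_apply, OrthonormalBasis.coe_toBasis]
  have hc : cf x0 ⟨0, hd⟩ = cf x0 k := hconst (x0, ⟨0, hd⟩) (x0, k)
  show M.mulVec (fun i => B x0 k i)
      = ((cf x0 ⟨0, hd⟩) • (1 : Matrix (Fin d) (Fin d) ℂ)).mulVec (fun i => B x0 k i)
  rw [Matrix.smul_mulVec, Matrix.one_mulVec, hc]
  exact hcf x0 k
end

section
/- Let ρ be a density operator on a d-dimensional complex Hilbert space, and suppose ρ is diagonal with respect to each of m orthonormal bases B_1,...,B_m whose transition graph is connected. Then ρ = (1/d) I, the maximally mixed state. -/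
open scoped InnerProductSpace ComplexOrder

theorem stmt_6 (d m : ℕ) (hd : 0 < d)
    (B : Fin m → OrthonormalBasis (Fin d) ℂ (EuclideanSpace ℂ (Fin d)))
    (G : SimpleGraph (Fin m × Fin d))
    (hG : ∀ v w, G.Adj v w ↔ v ≠ w ∧ ⟪B v.1 v.2, B w.1 w.2⟫_ℂ ≠ 0)
    (hconn : G.Connected)
    (ρ : Matrix (Fin d) (Fin d) ℂ) (hpsd : ρ.PosSemidef) (htr : ρ.trace = 1)
    (hdiag : ∀ x k, ∃ c : ℂ, ρ.mulVec (fun i => B x k i) = c • (fun i => B x k i)) :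
    ρ = ((d : ℂ))⁻¹ • (1 : Matrix (Fin d) (Fin d) ℂ) := by
  classical
  choose c hc using hdiag
  have hherm := hpsd.isHermitian
  -- the key computation: conj (c x k) * ⟪B x k, B y l⟫ = c y l * ⟪B x k, B y l⟫
  have key : ∀ (x : Fin m) (k : Fin d) (y : Fin m) (l : Fin d),
      (starRingEnd ℂ) (c x k) * ⟪B x k, B y l⟫_ℂ = c y l * ⟪B x k, B y l⟫_ℂ := by
    intro x k y l
    have hinner : ⟪B x k, B y l⟫_ℂ
        = dotProduct (star (fun i => B x k i)) (fun i => B y l i) := by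
      rw [EuclideanSpace.inner_eq_star_dotProduct, dotProduct_comm]
    have h1 : dotProduct (star (fun i => B x k i)) (ρ.mulVec (fun i => B y l i))
        = c y l * dotProduct (star (fun i => B x k i)) (fun i => B y l i) := by
      rw [hc y l, dotProduct_smul, smul_eq_mul]
    have hrow : Matrix.vecMul (star (fun i => B x k i)) ρ
        = (starRingEnd ℂ) (c x k) • star (fun i => B x k i) := by
      have h := congrArg star (hc x k)
      rw [Matrix.star_mulVec, hherm.eq, star_smul] at h
      simpa using h
    have h2 : dotProduct (star (fun i => B x k i)) (ρ.mulVec (fun i => B y l i))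
        = (starRingEnd ℂ) (c x k)
          * dotProduct (star (fun i => B x k i)) (fun i => B y l i) := by
      rw [Matrix.dotProduct_mulVec, hrow, smul_dotProduct, smul_eq_mul]
    rw [hinner]
    rw [← h1, ← h2]
  -- each eigenvalue is real
  have hreal : ∀ (x : Fin m) (k : Fin d), (starRingEnd ℂ) (c x k) = c x k := by
    intro x k
    have h := key x k x k
    have hone : ⟪B x k, B x k⟫_ℂ = 1 := by
      have ho := (B x).orthonormal
      rw [orthonormal_iff_ite] at ho
      simpa using ho k k
    rw [hone] at h
    simpa using h
  -- adjacent vertices have equal eigenvalues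
  have hadj : ∀ v w : Fin m × Fin d, G.Adj v w → c v.1 v.2 = c w.1 w.2 := by
    intro v w hvw
    obtain ⟨-, hne⟩ := (hG v w).1 hvw
    have h := key v.1 v.2 w.1 w.2
    rw [hreal] at h
    exact mul_right_cancel₀ hne h
  -- constancy over the connected graph
  have hconst : ∀ v w : Fin m × Fin d, c v.1 v.2 = c w.1 w.2 := by
    intro v w
    obtain ⟨p⟩ := hconn v w
    induction p with
    | nil => rfl
    | cons h _ ih => exact (hadj _ _ h).trans ih
  obtain ⟨v0⟩ := hconn.nonempty
  set c0 := c v0.1 v0.2 with hc0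
  -- ρ acts as c0 on a basis, hence on everything
  have hmaps : ρ.mulVecLin = (c0 • LinearMap.id : (Fin d → ℂ) →ₗ[ℂ] (Fin d → ℂ)) := by
    apply Module.Basis.ext ((B v0.1).toBasis.map (WithLp.linearEquiv 2 ℂ (Fin d → ℂ)))
    intro k
    have h := hc v0.1 k
    rw [hconst ⟨v0.1, k⟩ v0] at h
    simpa using h
  have hvec : ∀ u : Fin d → ℂ, ρ.mulVec u = c0 • u := by
    intro u
    have := congrArg (fun L => L u) hmaps
    simpa using this
  have hρ : ρ = c0 • (1 : Matrix (Fin d) (Fin d) ℂ) := by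
    ext i j
    have h := congrFun (hvec (Pi.single j 1)) i
    rw [Matrix.mulVec_single] at h
    simp only [MulOpposite.op_one, one_smul, Matrix.col_apply] at h
    simp [h, Matrix.one_apply, Pi.single_apply]
  have htrc : c0 * d = 1 := by
    have := htr
    rw [hρ, Matrix.trace_smul, Matrix.trace_one] at this
    simpa [mul_comm] using this
  have hdne : (d : ℂ) ≠ 0 := Nat.cast_ne_zero.mpr hd.ne'
  have : c0 = ((d : ℂ))⁻¹ := by field_simp at htrc ⊢; linear_combination htrc
  rw [hρ, this]
end

section
/- Let B_x, μ_x, Ω be as follows: B_x = {ψ_{xk}} are m orthonormal bases of ℂ^d, μ_x > 0 sum to 1, and Ω = Σ_{x,k} μ_x |ψ_{xk}⟩⟨ψ_{xk}| ⊗ |ψ*_{xk}⟩⟨ψ*_{xk}|. Every eigenvalue of Ω is at most 1, and the multiplicity of the eigenvalue 1 equals the number of connected components of the transition graph of the basis set {B_x} (vertices are the md pairs (x,k), with (x,k) ≠ (y,l) adjacent iff ⟨ψ_{xk}, ψ_{yl}⟩ ≠ 0). -/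
open scoped InnerProductSpace

/-- The rank-one operator `w ↦ ⟪v, w⟫ • v`. -/
noncomputable def rankOneOp {E : Type*} [NormedAddCommGroup E] [InnerProductSpace ℂ E]
    (v : E) : E →ₗ[ℂ] E :=
  ((innerSL ℂ v).toLinearMap).smulRight v

/-- The vector `ψ ⊗ ψ*` in `ℂ^d ⊗ ℂ^d ≅ ℂ^(d×d)`. -/
noncomputable def conjPair (d : ℕ) (v : EuclideanSpace ℂ (Fin d)) :
    EuclideanSpace ℂ (Fin d × Fin d) :=
  WithLp.toLp 2 (fun p : Fin d × Fin d => v p.1 * star (v p.2))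

lemma inner_conjPair {d : ℕ} (u w : EuclideanSpace ℂ (Fin d)) :
    ⟪conjPair d u, conjPair d w⟫_ℂ = ((‖⟪u, w⟫_ℂ‖ ^ 2 : ℝ) : ℂ) := by
  have h1 : ⟪conjPair d u, conjPair d w⟫_ℂ
      = (∑ i, (starRingEnd ℂ) (u i) * w i) * (∑ j, u j * (starRingEnd ℂ) (w j)) := by
    rw [Finset.sum_mul_sum]
    simp only [PiLp.inner_apply, conjPair, RCLike.inner_apply, WithLp.ofLp_toLp]
    rw [Fintype.sum_prod_type]
    apply Finset.sum_congr rfl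
    intro i _
    apply Finset.sum_congr rfl
    intro j _
    simp only [map_mul, Complex.star_def, Complex.conj_conj]
    ring
  have h2 : ⟪u, w⟫_ℂ = ∑ i, (starRingEnd ℂ) (u i) * w i := by
    simp [PiLp.inner_apply, RCLike.inner_apply]
    exact Finset.sum_congr rfl fun x _ => mul_comm _ _
  have h3 : (∑ j, u j * (starRingEnd ℂ) (w j)) = (starRingEnd ℂ) ⟪u, w⟫_ℂ := by
    rw [h2, map_sum]; apply Finset.sum_congr rfl; intro j _; simp [mul_comm]
  rw [h1, h3, ← h2, Complex.mul_conj', Complex.ofReal_pow]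

namespace Stmt10

variable {d m : ℕ}

/-- Parseval for orthonormal bases, real form. -/
lemma parseval (b : OrthonormalBasis (Fin d) ℂ (EuclideanSpace ℂ (Fin d)))
    (u : EuclideanSpace ℂ (Fin d)) (hu : ‖u‖ = 1) :
    ∑ k, ‖⟪b k, u⟫_ℂ‖ ^ 2 = (1 : ℝ) := by
  have h := b.sum_inner_mul_inner u u
  have h2 : ∀ k, ⟪u, b k⟫_ℂ * ⟪b k, u⟫_ℂ = ((‖⟪b k, u⟫_ℂ‖ ^ 2 : ℝ) : ℂ) := by
    intro k
    rw [← inner_conj_symm u (b k), mul_comm, Complex.mul_conj', Complex.ofReal_pow]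
  rw [Finset.sum_congr rfl (fun k _ => h2 k)] at h
  have h3 : ⟪u, u⟫_ℂ = ((1 : ℝ) : ℂ) := by
    rw [inner_self_eq_norm_sq_to_K, hu]; norm_num
  rw [h3, ← Complex.ofReal_sum] at h
  exact_mod_cast h

lemma orthonormal_e (ψ : Fin m → OrthonormalBasis (Fin d) ℂ (EuclideanSpace ℂ (Fin d)))
    (x : Fin m) : Orthonormal ℂ (fun k => conjPair d (ψ x k)) := by
  rw [orthonormal_iff_ite]
  intro k l
  rw [inner_conjPair, orthonormal_iff_ite.mp (ψ x).orthonormal k l]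
  by_cases h : k = l <;> simp [h]


lemma norm_sq_coeffs {ι : Type*} [Fintype ι] {E : Type*} [NormedAddCommGroup E]
    [InnerProductSpace ℂ E] {f : ι → E} (hf : Orthonormal ℂ f) (c : ι → ℂ) :
    ‖∑ i, c i • f i‖ ^ 2 = ∑ i, ‖c i‖ ^ 2 := by
  have h := hf.inner_sum c c Finset.univ
  have : ∀ i, (starRingEnd ℂ) (c i) * c i = ((‖c i‖ ^ 2 : ℝ) : ℂ) := fun i => by
    rw [mul_comm, Complex.mul_conj', Complex.ofReal_pow]
  rw [Finset.sum_congr rfl (fun i _ => this i), ← Complex.ofReal_sum] at h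
  rw [← inner_self_eq_norm_sq (𝕜 := ℂ), h]
  simp [RCLike.re_to_complex, ← Complex.ofReal_pow]

lemma proj_eq_of_norm {ι : Type*} [Fintype ι] {E : Type*} [NormedAddCommGroup E]
    [InnerProductSpace ℂ E] {f : ι → E} (hf : Orthonormal ℂ f) (v : E)
    (h : ∑ i, ‖⟪f i, v⟫_ℂ‖ ^ 2 = ‖v‖ ^ 2) :
    ∑ i, ⟪f i, v⟫_ℂ • f i = v := by
  set P := ∑ i, ⟪f i, v⟫_ℂ • f i with hP
  have hPnorm : ‖P‖ ^ 2 = ∑ i, ‖⟪f i, v⟫_ℂ‖ ^ 2 := norm_sq_coeffs hf _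
  have hvP : ⟪v, P⟫_ℂ = ((∑ i, ‖⟪f i, v⟫_ℂ‖ ^ 2 : ℝ) : ℂ) := by
    rw [hP, inner_sum]
    rw [Complex.ofReal_sum]
    apply Finset.sum_congr rfl
    intro i _
    rw [inner_smul_right, ← inner_conj_symm v (f i), Complex.mul_conj', Complex.ofReal_pow]
  have hre : RCLike.re (((∑ i, ‖⟪f i, v⟫_ℂ‖ ^ 2 : ℝ)) : ℂ)
      = ∑ i, ‖⟪f i, v⟫_ℂ‖ ^ 2 := by
    simp [RCLike.re_to_complex, ← Complex.ofReal_pow]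
  have hz : ‖v - P‖ ^ 2 = 0 := by
    rw [norm_sub_sq (𝕜 := ℂ), hvP, hre, hPnorm, h]
    ring
  have hvp : v - P = 0 := by
    have := pow_eq_zero_iff (n := 2) (by norm_num) |>.mp hz
    simpa [norm_eq_zero] using this
  exact (sub_eq_zero.mp hvp).symm

/-- Equality of coefficients across two "compatible" orthonormal expansions. -/
lemma coeff_eq {ι : Type*} [Fintype ι] [Nonempty ι] {E : Type*} [NormedAddCommGroup E]
    [InnerProductSpace ℂ E] {f g : ι → E} (hf : Orthonormal ℂ f) (hg : Orthonormal ℂ g)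
    (q : ι → ι → ℝ) (hq : ∀ i j, ⟪g j, f i⟫_ℂ = ((q i j : ℝ) : ℂ))
    (hq0 : ∀ i j, 0 ≤ q i j)
    (hrow : ∀ j, ∑ i, q i j = 1) (hcol : ∀ i, ∑ j, q i j = 1)
    (v : E) (hfv : ∑ i, ⟪f i, v⟫_ℂ • f i = v) (hgv : ∑ j, ⟪g j, v⟫_ℂ • g j = v)
    {i j : ι} (hij : q i j ≠ 0) : ⟪f i, v⟫_ℂ = ⟪g j, v⟫_ℂ := by
  set c : ι → ℂ := fun i => ⟪f i, v⟫_ℂ with hc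
  set b : ι → ℂ := fun j => ⟪g j, v⟫_ℂ with hb
  have hns : ∀ z : ℂ, Complex.normSq z = ‖z‖ ^ 2 := fun z => by
    rw [Complex.normSq_eq_norm_sq]
  -- key transfer identity
  have key : ∀ j, ∑ i, ((q i j : ℝ) : ℂ) * c i = b j := by
    intro j
    show ∑ i, ((q i j : ℝ) : ℂ) * c i = ⟪g j, v⟫_ℂ
    rw [← hfv, inner_sum]
    apply Finset.sum_congr rfl
    intro i _
    rw [inner_smul_right, hq, mul_comm]
  -- equal norms
  have hNf : ∑ i, ‖c i‖ ^ 2 = ‖v‖ ^ 2 := by rw [← norm_sq_coeffs hf c, hfv]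
  have hNg : ∑ j, ‖b j‖ ^ 2 = ‖v‖ ^ 2 := by rw [← norm_sq_coeffs hg b, hgv]
  have e1 : ∑ j, ∑ i, q i j * Complex.normSq (b j) = ∑ j, ‖b j‖ ^ 2 := by
    apply Finset.sum_congr rfl
    intro j _
    rw [← Finset.sum_mul, hrow, one_mul, hns]
  have e2 : ∑ j, ∑ i, q i j * Complex.normSq (c i) = ∑ i, ‖c i‖ ^ 2 := by
    rw [Finset.sum_comm]
    apply Finset.sum_congr rfl
    intro i _
    rw [← Finset.sum_mul, hcol, one_mul, hns]
  have e3 : ∀ j, ∑ i, (((q i j : ℝ) : ℂ) * (b j * (starRingEnd ℂ) (c i))).re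
      = ‖b j‖ ^ 2 := by
    intro j
    rw [← Complex.re_sum]
    have : ∑ i, ((q i j : ℝ) : ℂ) * (b j * (starRingEnd ℂ) (c i))
        = b j * (starRingEnd ℂ) (b j) := by
      rw [← key j, map_sum, Finset.mul_sum]
      apply Finset.sum_congr rfl
      intro i _
      simp only [map_mul, Complex.conj_ofReal]
      ring
    rw [this, Complex.mul_conj, ← hns]
    simp
  have hS : ∑ j, ∑ i, q i j * Complex.normSq (b j - c i) = 0 := by
    have expand : ∀ j i, q i j * Complex.normSq (b j - c i)
        = q i j * Complex.normSq (b j) + q i j * Complex.normSq (c i)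
          - 2 * (((q i j : ℝ) : ℂ) * (b j * (starRingEnd ℂ) (c i))).re := by
      intro j i
      rw [Complex.normSq_sub, Complex.re_ofReal_mul]
      ring
    calc ∑ j, ∑ i, q i j * Complex.normSq (b j - c i)
        = (∑ j, ∑ i, q i j * Complex.normSq (b j))
          + (∑ j, ∑ i, q i j * Complex.normSq (c i))
          - 2 * ∑ j, ∑ i, (((q i j : ℝ) : ℂ) * (b j * (starRingEnd ℂ) (c i))).re := by
          simp_rw [expand]
          rw [Finset.mul_sum]
          simp [Finset.sum_add_distrib, Finset.sum_sub_distrib, Finset.mul_sum]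
      _ = 0 := by
          rw [e1, e2, Finset.sum_congr rfl (fun j _ => e3 j), hNf, hNg]
          ring
  have hterm : q i j * Complex.normSq (b j - c i) = 0 := by
    have h1 := (Finset.sum_eq_zero_iff_of_nonneg (fun j _ => Finset.sum_nonneg
      (fun i _ => mul_nonneg (hq0 i j) (Complex.normSq_nonneg _)))).mp hS j (Finset.mem_univ j)
    exact (Finset.sum_eq_zero_iff_of_nonneg
      (fun i _ => mul_nonneg (hq0 i j) (Complex.normSq_nonneg _))).mp h1 i (Finset.mem_univ i)
  have : Complex.normSq (b j - c i) = 0 := by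
    rcases mul_eq_zero.mp hterm with h | h
    · exact absurd h hij
    · exact h
  have := Complex.normSq_eq_zero.mp this
  have := sub_eq_zero.mp this
  exact this.symm

end Stmt10

set_option maxHeartbeats 2000000 in
theorem stmt_10 (d m : ℕ) (hd : 0 < d) (hm : 0 < m)
    (ψ : Fin m → OrthonormalBasis (Fin d) ℂ (EuclideanSpace ℂ (Fin d)))
    (μ : Fin m → ℝ) (hμ : ∀ x, 0 < μ x) (hsum : ∑ x, μ x = 1)
    (Ω : EuclideanSpace ℂ (Fin d × Fin d) →ₗ[ℂ] EuclideanSpace ℂ (Fin d × Fin d))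
    (hΩ : Ω = ∑ x, ∑ k, (μ x : ℂ) • rankOneOp (conjPair d (ψ x k)))
    (G : SimpleGraph (Fin m × Fin d))
    (hG : ∀ v w, G.Adj v w ↔ v ≠ w ∧ ⟪ψ v.1 v.2, ψ w.1 w.2⟫_ℂ ≠ 0) :
    (∀ (c : ℂ) (v : EuclideanSpace ℂ (Fin d × Fin d)),
        v ≠ 0 → Ω v = c • v → c.im = 0 ∧ c.re ≤ 1) ∧
      Module.finrank ℂ (Module.End.eigenspace Ω 1) = Nat.card G.ConnectedComponent := by
  classical
  haveI : Nonempty (Fin d) := ⟨⟨0, hd⟩⟩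
  set e : Fin m → Fin d → EuclideanSpace ℂ (Fin d × Fin d) :=
    fun x k => conjPair d (ψ x k) with he_def
  have he : ∀ x, Orthonormal ℂ (e x) := fun x => Stmt10.orthonormal_e ψ x
  have hψn : ∀ x k, ‖ψ x k‖ = 1 := fun x k => (ψ x).orthonormal.1 k
  have hpars : ∀ (x y : Fin m) (l : Fin d), ∑ k, ‖⟪ψ x k, ψ y l⟫_ℂ‖ ^ 2 = 1 :=
    fun x y l => Stmt10.parseval (ψ x) (ψ y l) (hψn y l)
  have hpars' : ∀ (x y : Fin m) (l : Fin d), ∑ k, ‖⟪ψ y l, ψ x k⟫_ℂ‖ ^ 2 = 1 := by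
    intro x y l
    rw [Finset.sum_congr rfl fun k _ => by rw [← norm_inner_symm]]
    exact hpars x y l
  have hΩapp : ∀ v, Ω v = ∑ x, (μ x : ℂ) • ∑ k, ⟪e x k, v⟫_ℂ • e x k := by
    intro v
    rw [hΩ]
    simp only [LinearMap.sum_apply, LinearMap.smul_apply]
    refine Finset.sum_congr rfl fun x _ => ?_
    rw [Finset.smul_sum]
    exact Finset.sum_congr rfl fun k _ => rfl
  have hbes : ∀ x v, ∑ k, ‖⟪e x k, v⟫_ℂ‖ ^ 2 ≤ ‖v‖ ^ 2 :=
    fun x v => (he x).sum_inner_products_le v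
  have hinner : ∀ v, ⟪v, Ω v⟫_ℂ
      = ((∑ x, μ x * ∑ k, ‖⟪e x k, v⟫_ℂ‖ ^ 2 : ℝ) : ℂ) := by
    intro v
    rw [hΩapp, inner_sum, Complex.ofReal_sum]
    refine Finset.sum_congr rfl fun x _ => ?_
    rw [inner_smul_right, Complex.ofReal_mul]
    congr 1
    rw [inner_sum, Complex.ofReal_sum]
    refine Finset.sum_congr rfl fun k _ => ?_
    rw [inner_smul_right, ← inner_conj_symm v (e x k), Complex.mul_conj',
      Complex.ofReal_pow]
  -- Part 1
  have part1 : ∀ (c : ℂ) (v : EuclideanSpace ℂ (Fin d × Fin d)),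
      v ≠ 0 → Ω v = c • v → c.im = 0 ∧ c.re ≤ 1 := by
    intro c v hv hev
    set r : ℝ := ∑ x, μ x * ∑ k, ‖⟪e x k, v⟫_ℂ‖ ^ 2 with hr
    have hn : (0:ℝ) < ‖v‖ ^ 2 := pow_pos (norm_pos_iff.mpr hv) 2
    have h1 : c * ((‖v‖ ^ 2 : ℝ) : ℂ) = (r : ℂ) := by
      have hself : ⟪v, v⟫_ℂ = ((‖v‖ ^ 2 : ℝ) : ℂ) := by
        rw [inner_self_eq_norm_sq_to_K]; norm_cast
      rw [← hinner v, hev, inner_smul_right, hself]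
    have hc : c = ((r / ‖v‖ ^ 2 : ℝ) : ℂ) := by
      rw [Complex.ofReal_div]
      rw [eq_div_iff (by exact_mod_cast hn.ne')]
      exact h1
    have hrle : r ≤ ‖v‖ ^ 2 := by
      rw [hr]
      calc ∑ x, μ x * ∑ k, ‖⟪e x k, v⟫_ℂ‖ ^ 2
          ≤ ∑ x, μ x * ‖v‖ ^ 2 :=
            Finset.sum_le_sum fun x _ =>
              mul_le_mul_of_nonneg_left (hbes x v) (hμ x).le
        _ = ‖v‖ ^ 2 := by rw [← Finset.sum_mul, hsum, one_mul]
    constructor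
    · rw [hc]; exact Complex.ofReal_im _
    · rw [hc, Complex.ofReal_re, div_le_one hn]
      exact hrle
  refine ⟨part1, ?_⟩
  -- Part 2
  set mk : Fin m × Fin d → G.ConnectedComponent := G.connectedComponentMk with hmk_def
  have hmkadj : ∀ a b : Fin m × Fin d, ⟪ψ a.1 a.2, ψ b.1 b.2⟫_ℂ ≠ 0 → mk a = mk b := by
    intro a b h
    by_cases hab : a = b
    · rw [hab]
    · exact SimpleGraph.ConnectedComponent.sound ((hG a b).mpr ⟨hab, h⟩).reachable
  have hq0 : ∀ a b : Fin m × Fin d, mk a ≠ mk b → ⟪ψ a.1 a.2, ψ b.1 b.2⟫_ℂ = 0 := by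
    intro a b h
    by_contra hne
    exact h (hmkadj a b hne)
  -- eigenvectors project onto each basis family
  have hP : ∀ v, Ω v = v → ∀ x, ∑ k, ⟪e x k, v⟫_ℂ • e x k = v := by
    intro v hv x
    refine Stmt10.proj_eq_of_norm (he x) v ?_
    by_contra hne
    have hlt : ∑ k, ‖⟪e x k, v⟫_ℂ‖ ^ 2 < ‖v‖ ^ 2 := lt_of_le_of_ne (hbes x v) hne
    have h2 : ∑ y, μ y * ∑ k, ‖⟪e y k, v⟫_ℂ‖ ^ 2 = ‖v‖ ^ 2 := by
      have h1 : ((∑ y, μ y * ∑ k, ‖⟪e y k, v⟫_ℂ‖ ^ 2 : ℝ) : ℂ) = ((‖v‖ ^ 2 : ℝ) : ℂ) := by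
        rw [← hinner v, hv, inner_self_eq_norm_sq_to_K]
        norm_cast
      exact_mod_cast h1
    have h3 : ∑ y, μ y * ∑ k, ‖⟪e y k, v⟫_ℂ‖ ^ 2 < ‖v‖ ^ 2 := by
      calc ∑ y, μ y * ∑ k, ‖⟪e y k, v⟫_ℂ‖ ^ 2
          < ∑ y, μ y * ‖v‖ ^ 2 := by
            refine Finset.sum_lt_sum (fun y _ =>
              mul_le_mul_of_nonneg_left (hbes y v) (hμ y).le) ?_
            exact ⟨x, Finset.mem_univ x, by
              exact mul_lt_mul_of_pos_left hlt (hμ x)⟩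
        _ = ‖v‖ ^ 2 := by rw [← Finset.sum_mul, hsum, one_mul]
    exact absurd h2 h3.ne
  have heig : ∀ v, Ω v = v ↔ ∀ x, ∑ k, ⟪e x k, v⟫_ℂ • e x k = v := by
    intro v
    constructor
    · exact hP v
    · intro h
      rw [hΩapp, Finset.sum_congr rfl fun x _ => by rw [h x], ← Finset.sum_smul]
      have : (∑ x, ((μ x : ℝ) : ℂ)) = 1 := by
        rw [← Complex.ofReal_sum, hsum, Complex.ofReal_one]
      rw [this, one_smul]
  -- coefficients transfer along edges
  have hstep : ∀ v, (∀ x, ∑ k, ⟪e x k, v⟫_ℂ • e x k = v) →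
      ∀ a b : Fin m × Fin d, G.Adj a b → ⟪e a.1 a.2, v⟫_ℂ = ⟪e b.1 b.2, v⟫_ℂ := by
    intro v hv a b hab
    obtain ⟨hne, hip⟩ := (hG a b).mp hab
    refine Stmt10.coeff_eq (he a.1) (he b.1)
      (fun i j => ‖⟪ψ a.1 i, ψ b.1 j⟫_ℂ‖ ^ 2) ?_ (fun i j => by positivity)
      (fun j => hpars a.1 b.1 j) (fun i => hpars' b.1 a.1 i) v (hv a.1) (hv b.1) ?_
    · intro i j
      rw [he_def]
      rw [inner_conjPair, ← norm_inner_symm]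
    · intro h
      exact hip (by
        have := pow_eq_zero_iff (n := 2) (by norm_num) |>.mp h
        simpa [norm_eq_zero] using this)
  -- coefficients are constant on connected components
  have hconst : ∀ v, (∀ x, ∑ k, ⟪e x k, v⟫_ℂ • e x k = v) →
      ∀ a b : Fin m × Fin d, mk a = mk b → ⟪e a.1 a.2, v⟫_ℂ = ⟪e b.1 b.2, v⟫_ℂ := by
    intro v hv a b hR
    obtain ⟨p⟩ := (SimpleGraph.ConnectedComponent.eq).mp hR
    induction p with
    | nil => rfl
    | cons h q ih => exact (hstep v hv _ _ h).trans (ih (SimpleGraph.ConnectedComponent.sound q.reachable))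
  haveI : Finite G.ConnectedComponent :=
    Finite.of_surjective mk (fun C => C.exists_rep)
  haveI : Fintype G.ConnectedComponent := Fintype.ofFinite _
  set x0 : Fin m := ⟨0, hm⟩ with hx0_def
  set Vc : G.ConnectedComponent → EuclideanSpace ℂ (Fin d × Fin d) :=
    fun C => ∑ k, if mk (x0, k) = C then e x0 k else 0 with hVc_def
  -- Claim A
  have claimA : ∀ (x : Fin m) (C : G.ConnectedComponent) (l : Fin d),
      ⟪e x l, Vc C⟫_ℂ = if mk (x, l) = C then 1 else 0 := by
    intro x C l
    rw [hVc_def, inner_sum]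
    have hterm : ∀ k, ⟪e x l, if mk (x0, k) = C then e x0 k else 0⟫_ℂ
        = if mk (x0, k) = C then ((‖⟪ψ x l, ψ x0 k⟫_ℂ‖ ^ 2 : ℝ) : ℂ) else 0 := by
      intro k
      by_cases h : mk (x0, k) = C
      · rw [if_pos h, if_pos h]
        exact inner_conjPair _ _
      · rw [if_neg h, if_neg h, inner_zero_right]
    rw [Finset.sum_congr rfl fun k _ => hterm k]
    by_cases h : mk (x, l) = C
    · rw [if_pos h]
      have : ∀ k, (if mk (x0, k) = C then ((‖⟪ψ x l, ψ x0 k⟫_ℂ‖ ^ 2 : ℝ) : ℂ) else 0)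
          = ((‖⟪ψ x l, ψ x0 k⟫_ℂ‖ ^ 2 : ℝ) : ℂ) := by
        intro k
        by_cases hk : mk (x0, k) = C
        · rw [if_pos hk]
        · rw [if_neg hk]
          have : ⟪ψ x l, ψ x0 k⟫_ℂ = 0 :=
            hq0 (x, l) (x0, k) (by rw [h]; exact fun hc => hk hc.symm)
          rw [this]
          simp
      rw [Finset.sum_congr rfl fun k _ => this k, ← Complex.ofReal_sum,
        hpars' x0 x l, Complex.ofReal_one]
    · rw [if_neg h]
      refine Finset.sum_eq_zero fun k _ => ?_
      by_cases hk : mk (x0, k) = C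
      · rw [if_pos hk]
        have : ⟪ψ x l, ψ x0 k⟫_ℂ = 0 :=
          hq0 (x, l) (x0, k) (by rw [hk]; exact h)
        rw [this]
        simp
      · rw [if_neg hk]
  -- counting function
  have claimCount : ∀ (x : Fin m) (C : G.ConnectedComponent),
      ∑ l, (if mk (x, l) = C then (1:ℝ) else 0)
        = ∑ k, (if mk (x0, k) = C then (1:ℝ) else 0) := by
    intro x C
    have rowsum : ∀ l, ∑ k, (if mk (x, l) = C then
        (if mk (x0, k) = C then ‖⟪ψ x l, ψ x0 k⟫_ℂ‖ ^ 2 else 0) else 0)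
        = if mk (x, l) = C then (1:ℝ) else 0 := by
      intro l
      by_cases h : mk (x, l) = C
      · simp only [if_pos h]
        have : ∀ k, (if mk (x0, k) = C then ‖⟪ψ x l, ψ x0 k⟫_ℂ‖ ^ 2 else 0)
            = ‖⟪ψ x l, ψ x0 k⟫_ℂ‖ ^ 2 := by
          intro k
          by_cases hk : mk (x0, k) = C
          · rw [if_pos hk]
          · rw [if_neg hk, hq0 (x, l) (x0, k) (by rw [h]; exact fun hc => hk hc.symm)]
            simp
        rw [Finset.sum_congr rfl fun k _ => this k, hpars' x0 x l]
      · simp only [if_neg h]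
        simp
    have colsum : ∀ k, ∑ l, (if mk (x, l) = C then
        (if mk (x0, k) = C then ‖⟪ψ x l, ψ x0 k⟫_ℂ‖ ^ 2 else 0) else 0)
        = if mk (x0, k) = C then (1:ℝ) else 0 := by
      intro k
      by_cases h : mk (x0, k) = C
      · rw [if_pos h]
        have h1 : ∀ l, (if mk (x, l) = C then
            (if mk (x0, k) = C then ‖⟪ψ x l, ψ x0 k⟫_ℂ‖ ^ 2 else 0) else 0)
            = ‖⟪ψ x l, ψ x0 k⟫_ℂ‖ ^ 2 := by
          intro l
          by_cases hl : mk (x, l) = C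
          · rw [if_pos hl, if_pos h]
          · rw [if_neg hl, hq0 (x, l) (x0, k) (by rw [h]; exact hl)]
            simp
        rw [Finset.sum_congr rfl fun l _ => h1 l, hpars x x0 k]
      · rw [if_neg h]
        refine Finset.sum_eq_zero fun l _ => ?_
        by_cases hl : mk (x, l) = C
        · rw [if_pos hl, if_neg h]
        · rw [if_neg hl]
    rw [← Finset.sum_congr rfl fun l (_ : l ∈ Finset.univ) => rowsum l,
      Finset.sum_comm,
      Finset.sum_congr rfl fun k (_ : k ∈ Finset.univ) => colsum k]
  -- norm of Vc
  have claimB : ∀ C, ‖Vc C‖ ^ 2 = ∑ k, (if mk (x0, k) = C then (1:ℝ) else 0) := by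
    intro C
    have hrw : Vc C = ∑ k, (if mk (x0, k) = C then (1:ℂ) else 0) • e x0 k := by
      rw [hVc_def]
      refine Finset.sum_congr rfl fun k _ => ?_
      rw [ite_smul, one_smul, zero_smul]
    rw [hrw, Stmt10.norm_sq_coeffs (he x0)]
    refine Finset.sum_congr rfl fun k _ => ?_
    by_cases hk : mk (x0, k) = C <;> simp [hk]
  -- each Vc C is a fixed point of Ω
  have hmem : ∀ C, Ω (Vc C) = Vc C := by
    intro C
    rw [heig]
    intro x
    refine Stmt10.proj_eq_of_norm (he x) _ ?_
    rw [claimB C, ← claimCount x C]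
    refine Finset.sum_congr rfl fun l _ => ?_
    rw [claimA x C l]
    by_cases h : mk (x, l) = C <;> simp [h]
  -- nonvanishing: every component meets the x0 fiber
  have hrep : ∀ C : G.ConnectedComponent, ∃ k, mk (x0, k) = C := by
    intro C
    obtain ⟨a, ha⟩ := C.exists_rep
    have : ∃ k, ⟪ψ x0 k, ψ a.1 a.2⟫_ℂ ≠ 0 := by
      by_contra hno
      push_neg at hno
      have : ψ a.1 a.2 = 0 := by
        have hrepr := (ψ x0).sum_repr (ψ a.1 a.2)
        rw [Finset.sum_congr rfl (fun k _ => by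
          rw [(ψ x0).repr_apply_apply, hno k, zero_smul])] at hrepr
        simpa using hrepr.symm
      have h2 := hψn a.1 a.2
      rw [this] at h2
      simp at h2
    obtain ⟨k, hk⟩ := this
    exact ⟨k, (hmkadj (x0, k) a hk).trans ha⟩
  -- spanning
  have hspan : ∀ v, Ω v = v → v ∈ Submodule.span ℂ (Set.range Vc) := by
    intro v hv
    have hv' := (heig v).mp hv
    set lam : G.ConnectedComponent → ℂ :=
      fun C => ⟪e x0 (hrep C).choose, v⟫_ℂ with hlam_def
    have key : ∑ C, lam C • Vc C = v := by
      have expand : ∀ C : G.ConnectedComponent, lam C • Vc C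
          = ∑ k, (if mk (x0, k) = C then lam C • e x0 k else 0) := by
        intro C
        rw [hVc_def, Finset.smul_sum]
        exact Finset.sum_congr rfl fun k _ => by
          by_cases h : mk (x0, k) = C <;> simp [h]
      calc ∑ C, lam C • Vc C
          = ∑ C, ∑ k, (if mk (x0, k) = C then lam C • e x0 k else 0) :=
            Finset.sum_congr rfl fun C _ => expand C
        _ = ∑ k, ∑ C, (if mk (x0, k) = C then lam C • e x0 k else 0) :=
            Finset.sum_comm
        _ = ∑ k, lam (mk (x0, k)) • e x0 k := by
            refine Finset.sum_congr rfl fun k _ => ?_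
            rw [Finset.sum_ite_eq, if_pos (Finset.mem_univ _)]
        _ = ∑ k, ⟪e x0 k, v⟫_ℂ • e x0 k := by
            refine Finset.sum_congr rfl fun k _ => ?_
            have hcc : lam (mk (x0, k)) = ⟪e x0 k, v⟫_ℂ :=
              hconst v hv' (x0, (hrep (mk (x0, k))).choose) (x0, k)
                (hrep (mk (x0, k))).choose_spec
            rw [hcc]
        _ = v := hv' x0
    rw [← key]
    exact Submodule.sum_mem _ fun C _ =>
      Submodule.smul_mem _ _ (Submodule.subset_span ⟨C, rfl⟩)
  have hnz : ∀ C, Vc C ≠ 0 := by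
    intro C hC
    obtain ⟨k, hk⟩ := hrep C
    have := claimA x0 C k
    rw [hC, inner_zero_right, if_pos hk] at this
    exact one_ne_zero this.symm
  have horth : Pairwise fun C C' => ⟪Vc C, Vc C'⟫_ℂ = 0 := by
    intro C C' hCC
    rw [hVc_def, sum_inner]
    refine Finset.sum_eq_zero fun k _ => ?_
    by_cases h : mk (x0, k) = C
    · rw [if_pos h, claimA x0 C' k, if_neg (by rw [h]; exact hCC)]
    · rw [if_neg h, inner_zero_left]
  have hindep : LinearIndependent ℂ Vc :=
    linearIndependent_of_ne_zero_of_inner_eq_zero hnz horth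
  have hEq : Module.End.eigenspace Ω 1 = Submodule.span ℂ (Set.range Vc) := by
    apply le_antisymm
    · intro v hv
      rw [Module.End.mem_eigenspace_iff, one_smul] at hv
      exact hspan v hv
    · rw [Submodule.span_le]
      rintro _ ⟨C, rfl⟩
      rw [SetLike.mem_coe, Module.End.mem_eigenspace_iff, one_smul]
      exact hmem C
  rw [hEq, finrank_span_eq_card hindep, Nat.card_eq_fintype_card]
end

section
/- Let Ψ_s and Ψ_t be two maximally entangled unit vectors in ℂ^{d_A} ⊗ ℂ^{d_B} (each with reduced A-state equal to (1/d_A)I). If both (Ψ_s + Ψ_t)/√2 and (Ψ_s + i Ψ_t)/√2 are also maximally entangled unit vectors, then Tr_A(|Ψ_s⟩⟨Ψ_s|) and Tr_A(|Ψ_t⟩⟨Ψ_t|) have orthogonal supports. -/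
/-- A unit vector in `ℂ^{dA} ⊗ ℂ^{dB} ≅ ℂ^(dA×dB)` is maximally entangled if its
reduced state on the first factor is the maximally mixed state `(1/dA) I`. -/
def IsMaxEnt (dA dB : ℕ) (Ψ : EuclideanSpace ℂ (Fin dA × Fin dB)) : Prop :=
  ‖Ψ‖ = 1 ∧ ∀ a a', (∑ b, Ψ (a, b) * star (Ψ (a', b))) =
    if a = a' then ((dA : ℂ))⁻¹ else 0

private lemma aux1 (A B A' B' r : ℂ) (hr : r * star r = 2⁻¹) :
    (r * (A + B)) * star (r * (A' + B')) =
      2⁻¹ * (A * star A' + A * star B' + B * star A' + B * star B') := by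
  rw [star_mul', star_add]
  linear_combination (A + B) * (star A' + star B') * hr

private lemma aux2 (A B A' B' r : ℂ) (hr : r * star r = 2⁻¹) :
    (r * (A + Complex.I * B)) * star (r * (A' + Complex.I * B')) =
      2⁻¹ * (A * star A' + (-Complex.I) * (A * star B') +
        Complex.I * (B * star A') + B * star B') := by
  have hI : star Complex.I = -Complex.I := by
    simp [Complex.star_def, Complex.conj_I]
  rw [star_mul', star_add, star_mul', hI]
  linear_combination (A + Complex.I * B) * (star A' - Complex.I * star B') * hr
    - 2⁻¹ * B * star B' * Complex.I_mul_I

theorem stmt_14 (dA dB : ℕ)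
    (Ψs Ψt : EuclideanSpace ℂ (Fin dA × Fin dB))
    (hs : IsMaxEnt dA dB Ψs) (ht : IsMaxEnt dA dB Ψt)
    (hplus : IsMaxEnt dA dB (((Real.sqrt 2 : ℂ))⁻¹ • (Ψs + Ψt)))
    (hplusI : IsMaxEnt dA dB (((Real.sqrt 2 : ℂ))⁻¹ • (Ψs + Complex.I • Ψt))) :
    ∀ j k, ∑ b, star (Ψs (j, b)) * Ψt (k, b) = 0 := by
  intro j k
  set r : ℂ := ((Real.sqrt 2 : ℂ))⁻¹ with hrdef
  have hstar : star r = r := by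
    simp [hrdef, Complex.star_def, map_inv₀, Complex.conj_ofReal]
  have hr : r * star r = 2⁻¹ := by
    rw [hstar, hrdef, ← mul_inv, ← Complex.ofReal_mul,
      Real.mul_self_sqrt (by norm_num : (0:ℝ) ≤ 2)]
    norm_num
  set c : ℂ := ∑ b, Ψs (k, b) * star (Ψt (j, b)) with hc
  set d : ℂ := ∑ b, Ψt (k, b) * star (Ψs (j, b)) with hd
  have hs' := hs.2 k j
  have ht' := ht.2 k j
  have hp := hplus.2 k j
  have hq := hplusI.2 k j
  have hp' : (2:ℂ)⁻¹ * ((∑ b, Ψs (k, b) * star (Ψs (j, b))) + c + d +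
      (∑ b, Ψt (k, b) * star (Ψt (j, b)))) = if k = j then ((dA : ℂ))⁻¹ else 0 := by
    rw [← hp]
    simp only [PiLp.smul_apply, PiLp.add_apply, smul_eq_mul]
    rw [hc, hd, ← Finset.sum_add_distrib, ← Finset.sum_add_distrib,
      ← Finset.sum_add_distrib, Finset.mul_sum]
    exact Finset.sum_congr rfl fun b _ => (aux1 _ _ _ _ _ hr).symm
  have hq' : (2:ℂ)⁻¹ * ((∑ b, Ψs (k, b) * star (Ψs (j, b))) + (-Complex.I) * c +
      Complex.I * d + (∑ b, Ψt (k, b) * star (Ψt (j, b)))) =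
      if k = j then ((dA : ℂ))⁻¹ else 0 := by
    rw [← hq]
    simp only [PiLp.smul_apply, PiLp.add_apply, smul_eq_mul]
    rw [hc, hd, Finset.mul_sum, Finset.mul_sum, ← Finset.sum_add_distrib,
      ← Finset.sum_add_distrib, ← Finset.sum_add_distrib, Finset.mul_sum]
    exact Finset.sum_congr rfl fun b _ => (aux2 _ _ _ _ _ hr).symm
  rw [hs', ht'] at hp' hq'
  have h1 : c + d = 0 := by
    split_ifs at hp' with h <;> linear_combination 2 * hp'
  have h2 : (-Complex.I) * c + Complex.I * d = 0 := by
    split_ifs at hq' with h <;> linear_combination 2 * hq'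
  have h3 : d = c := by
    linear_combination (-Complex.I) * h2 + (d - c) * Complex.I_mul_I
  have key : d = 0 := by linear_combination h1 / 2 + h3 / 2
  calc ∑ b, star (Ψs (j, b)) * Ψt (k, b) = d := by
        rw [hd]; exact Finset.sum_congr rfl fun b _ => mul_comm _ _
    _ = 0 := key
end

section
/- Let ρ be a density operator on ℂ^{d_A} ⊗ ℂ^{d_B} with spectral decomposition ρ = Σ_s λ_s |Ψ_s⟩⟨Ψ_s| (λ_s > 0, Ψ_s orthonormal). If every unit vector in the range of ρ is maximally entangled (its reduced B-trace is (1/d_A)I), then the reduced states Tr_A(|Ψ_s⟩⟨Ψ_s|) have pairwise orthogonal supports. -/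
open scoped InnerProductSpace

private lemma norm_comb {E : Type*} [NormedAddCommGroup E] [InnerProductSpace ℂ E]
    (u v : E) (hu : ‖u‖ = 1) (hv : ‖v‖ = 1) (huv : ⟪u, v⟫_ℂ = 0) (c : ℂ) (hc : ‖c‖ = 1) :
    ‖((Real.sqrt 2)⁻¹ : ℝ) • (u + c • v)‖ = 1 := by
  have h2 : ‖u + c • v‖ ^ 2 = 2 := by
    rw [@norm_add_sq ℂ, inner_smul_right, huv, hu, norm_smul, hc, hv]
    simp; norm_num
  have h2' : ‖u + c • v‖ = Real.sqrt 2 := by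
    rw [← Real.sqrt_sq (norm_nonneg _), h2]
  rw [norm_smul, h2', Real.norm_eq_abs, abs_of_nonneg (by positivity)]
  rw [inv_mul_cancel₀ (by positivity)]

theorem stmt_15 (dA dB n : ℕ) (hd : dA ≤ dB)
    (Ψ : Fin n → EuclideanSpace ℂ (Fin dA × Fin dB)) (hon : Orthonormal ℂ Ψ)
    (lam : Fin n → ℝ) (hlam : ∀ s, 0 < lam s) (hsum : ∑ s, lam s = 1)
    (ρ : EuclideanSpace ℂ (Fin dA × Fin dB) →ₗ[ℂ] EuclideanSpace ℂ (Fin dA × Fin dB))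
    (hρ : ρ = ∑ s, (lam s : ℂ) • rankOneOp (Ψ s))
    (hME : ∀ Φ ∈ LinearMap.range ρ, ‖Φ‖ = 1 →
      ∀ a a', (∑ b, Φ (a, b) * star (Φ (a', b))) = if a = a' then ((dA : ℂ))⁻¹ else 0) :
    ∀ s t, s ≠ t → ∀ j k, ∑ b, star (Ψ s (j, b)) * Ψ t (k, b) = 0 := by
  have hmem : ∀ s, Ψ s ∈ LinearMap.range ρ := by
    intro s
    refine ⟨((lam s : ℂ))⁻¹ • Ψ s, ?_⟩
    rw [hρ]
    simp only [LinearMap.sum_apply, LinearMap.smul_apply, rankOneOp, LinearMap.smulRight_apply,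
      LinearMap.coe_smul, ContinuousLinearMap.coe_coe, innerSL_apply_apply, inner_smul_right,
      orthonormal_iff_ite.mp hon]
    rw [Finset.sum_eq_single s]
    · have h0 : (lam s : ℂ) ≠ 0 := by exact_mod_cast (hlam s).ne'
      simp [smul_smul, h0]
    · intro u _ hu; simp [hu]
    · simp
  intro s t hst j k
  set u := Ψ s with hu
  set v := Ψ t with hv
  set r : ℝ := (Real.sqrt 2)⁻¹ with hr
  have hr2 : (r : ℂ) * (r : ℂ) = (2 : ℂ)⁻¹ := by
    have : r * r = (2:ℝ)⁻¹ := by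
      rw [hr, ← mul_inv, Real.mul_self_sqrt (by norm_num)]
    rw [← Complex.ofReal_mul, this]; push_cast; ring
  have hnu : ‖u‖ = 1 := hon.1 s
  have hnv : ‖v‖ = 1 := hon.1 t
  have hiuv : ⟪u, v⟫_ℂ = 0 := hon.2 hst
  set δ : ℂ := if j = k then ((dA : ℂ))⁻¹ else 0 with hδ
  set A : ℂ := ∑ b, u (j, b) * star (u (k, b)) with hA
  set B : ℂ := ∑ b, v (j, b) * star (v (k, b)) with hB
  set X : ℂ := ∑ b, u (j, b) * star (v (k, b)) with hX
  set Y : ℂ := ∑ b, v (j, b) * star (u (k, b)) with hY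
  have heA : A = δ := hME u (hmem s) hnu j k
  have heB : B = δ := hME v (hmem t) hnv j k
  -- Φ₁ = r • (u + v)
  have hmem1 : r • (u + v) ∈ LinearMap.range ρ := by
    have := Submodule.add_mem _ (hmem s) (hmem t)
    exact Submodule.smul_of_tower_mem _ r this
  have hn1 : ‖r • (u + v)‖ = 1 := by
    have := norm_comb u v hnu hnv hiuv 1 (by simp)
    simpa using this
  have he1 : (r:ℂ) * (r:ℂ) * (A + X + Y + B) = δ := by
    have h := hME (r • (u + v)) hmem1 hn1 j k
    rw [hδ, ← h, hA, hX, hY, hB]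
    rw [← Finset.sum_add_distrib, ← Finset.sum_add_distrib, ← Finset.sum_add_distrib,
      Finset.mul_sum]
    refine Finset.sum_congr rfl fun b _ => ?_
    simp only [PiLp.smul_apply, PiLp.add_apply, smul_eq_mul, Complex.real_smul,
      Complex.star_def, map_add, map_mul, Complex.conj_ofReal]
    ring
  -- Φ₂ = r • (u + I • v)
  have hmem2 : r • (u + Complex.I • v) ∈ LinearMap.range ρ := by
    have := Submodule.add_mem _ (hmem s) (Submodule.smul_mem _ Complex.I (hmem t))
    exact Submodule.smul_of_tower_mem _ r this
  have hn2 : ‖r • (u + Complex.I • v)‖ = 1 :=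
    norm_comb u v hnu hnv hiuv Complex.I (by simp)
  have he2 : (r:ℂ) * (r:ℂ) * (A + (starRingEnd ℂ Complex.I) * X + Complex.I * Y + B) = δ := by
    have h := hME (r • (u + Complex.I • v)) hmem2 hn2 j k
    rw [hδ, ← h, hA, hX, hY, hB]
    rw [Finset.mul_sum, Finset.mul_sum,
      ← Finset.sum_add_distrib, ← Finset.sum_add_distrib, ← Finset.sum_add_distrib,
      Finset.mul_sum]
    refine Finset.sum_congr rfl fun b _ => ?_
    simp only [PiLp.smul_apply, PiLp.add_apply, smul_eq_mul, Complex.real_smul,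
      Complex.star_def, map_add, map_mul, Complex.conj_ofReal]
    have hIc : (starRingEnd ℂ) Complex.I * Complex.I = 1 := by
      simp [Complex.conj_I]
    linear_combination (-(r:ℂ) * (r:ℂ) * v (j, b) * (starRingEnd ℂ) (v (k, b))) * hIc
  rw [hr2] at he1 he2
  have hXY : X + Y = 0 := by
    have : (2:ℂ)⁻¹ * (A + X + Y + B) - (2:ℂ)⁻¹ * (A + B) = 0 := by
      rw [he1, heA, heB]; ring
    linear_combination 2 * this
  have hXY2 : X - Y = 0 := by
    have h := he2
    rw [Complex.conj_I] at h
    have h1 : (2:ℂ)⁻¹ * (A + -Complex.I * X + Complex.I * Y + B) - (2:ℂ)⁻¹ * (A + B) = 0 := by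
      rw [h, heA, heB]; ring
    have h2 : Complex.I * (X - Y) = 0 := by linear_combination -2 * h1
    rcases mul_eq_zero.mp h2 with h3 | h3
    · exact (Complex.I_ne_zero h3).elim
    · exact h3
  have hX0 : X = 0 := by
    linear_combination (2:ℂ)⁻¹ * hXY + (2:ℂ)⁻¹ * hXY2
  have : (∑ b, star (u (j, b)) * v (k, b)) = star X := by
    rw [hX, star_sum]
    refine Finset.sum_congr rfl fun b _ => ?_
    rw [star_mul', star_star]
  rw [this, hX0, star_zero]
end

section
/- Suppose the orthonormal bases B_x = {ψ_{xk}} (x = 1,...,m) of ℂ^d have a connected transition graph, and suppose {σ_{xk}} is a family of positive semidefinite operators on ℂ^d such that Σ_k σ_{xk} = ρ for all x (with ρ a fixed density operator) and Σ_k ⟨ψ_{xk}, σ_{xk} ψ_{xk}⟩ = 1 for each x. Then ρ = (1/d) I and σ_{xk} = (1/d) |ψ_{xk}⟩⟨ψ_{xk}| for all x, k. -/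
open scoped InnerProductSpace ComplexOrder

open Matrix

variable {d : ℕ}

noncomputable def Umat (b : OrthonormalBasis (Fin d) ℂ (EuclideanSpace ℂ (Fin d))) :
    Matrix (Fin d) (Fin d) ℂ := Matrix.of fun i l => b l i

lemma Umat_conj_mul (b : OrthonormalBasis (Fin d) ℂ (EuclideanSpace ℂ (Fin d))) :
    (Umat b)ᴴ * Umat b = 1 := by
  ext k l
  have := orthonormal_iff_ite.mp b.orthonormal k l
  simp only [PiLp.inner_apply, RCLike.inner_apply] at this
  simp [Umat, Matrix.mul_apply, Matrix.conjTranspose_apply, Matrix.one_apply, this]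
  rw [← this]; exact Finset.sum_congr rfl fun _ _ => mul_comm _ _

lemma Umat_mul_conj (b : OrthonormalBasis (Fin d) ℂ (EuclideanSpace ℂ (Fin d))) :
    Umat b * (Umat b)ᴴ = 1 := mul_eq_one_comm.mp (Umat_conj_mul b)

lemma conj_entry (b : OrthonormalBasis (Fin d) ℂ (EuclideanSpace ℂ (Fin d)))
    (M : Matrix (Fin d) (Fin d) ℂ) (l l' : Fin d) :
    ((Umat b)ᴴ * M * Umat b) l l'
      = star (fun i => b l i) ⬝ᵥ M *ᵥ (fun i => b l' i) := by
  simp only [Umat, Matrix.mul_apply, Matrix.conjTranspose_apply, Matrix.of_apply,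
    dotProduct, Matrix.mulVec, Pi.star_apply, Finset.sum_mul, Finset.mul_sum]
  rw [Finset.sum_comm]
  congr 1; ext i; congr 1; ext j; ring

lemma eq_of_conj (b : OrthonormalBasis (Fin d) ℂ (EuclideanSpace ℂ (Fin d)))
    {M N : Matrix (Fin d) (Fin d) ℂ}
    (h : (Umat b)ᴴ * M * Umat b = (Umat b)ᴴ * N * Umat b) : M = N := by
  have key : ∀ X : Matrix (Fin d) (Fin d) ℂ,
      Umat b * ((Umat b)ᴴ * X * Umat b) * (Umat b)ᴴ = X := fun X => by
    simp only [Matrix.mul_assoc, Umat_mul_conj, Matrix.mul_one]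
    rw [← Matrix.mul_assoc, Umat_mul_conj, Matrix.one_mul]
  rw [← key M, h, key N]

lemma trace_eq_sum (b : OrthonormalBasis (Fin d) ℂ (EuclideanSpace ℂ (Fin d)))
    (M : Matrix (Fin d) (Fin d) ℂ) :
    M.trace = ∑ l, star (fun i => b l i) ⬝ᵥ M *ᵥ (fun i => b l i) := by
  have : M.trace = ((Umat b)ᴴ * M * Umat b).trace := by
    rw [Matrix.trace_mul_comm, ← Matrix.mul_assoc, Umat_mul_conj, Matrix.one_mul]
  rw [this, Matrix.trace]
  simp only [Matrix.diag_apply, conj_entry]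

lemma sum_proj (b : OrthonormalBasis (Fin d) ℂ (EuclideanSpace ℂ (Fin d))) :
    ∑ k, Matrix.vecMulVec (fun i => b k i) (star (fun i => b k i))
      = (1 : Matrix (Fin d) (Fin d) ℂ) := by
  have := Umat_mul_conj b
  ext i j
  have h2 := congrFun (congrFun this i) j
  simp only [Umat, Matrix.mul_apply, Matrix.conjTranspose_apply, Matrix.of_apply] at h2
  simpa [Matrix.sum_apply, Matrix.vecMulVec_apply] using h2

lemma herm_dot {M : Matrix (Fin d) (Fin d) ℂ} (hM : M.IsHermitian) (a c : Fin d → ℂ) :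
    star a ⬝ᵥ M *ᵥ c = star (star c ⬝ᵥ M *ᵥ a) := by
  rw [Matrix.star_dotProduct, Matrix.star_mulVec, hM.eq, ← Matrix.dotProduct_mulVec]

lemma vecMulVec_mulVec (a b w : Fin d → ℂ) :
    (Matrix.vecMulVec a b) *ᵥ w = (b ⬝ᵥ w) • a := by
  ext i
  simp only [Matrix.mulVec, dotProduct, Matrix.vecMulVec_apply, Pi.smul_apply,
    smul_eq_mul, Finset.sum_mul]
  exact Finset.sum_congr rfl fun j _ => by ring

lemma matSum_mulVec {ι : Type*} (s : Finset ι) (M : ι → Matrix (Fin d) (Fin d) ℂ)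
    (w : Fin d → ℂ) : (∑ k ∈ s, M k) *ᵥ w = ∑ k ∈ s, M k *ᵥ w := by
  ext i
  simp only [Matrix.mulVec, dotProduct, Matrix.sum_apply, Finset.sum_mul,
    Finset.sum_apply]
  rw [Finset.sum_comm]

theorem stmt_16 (d m : ℕ) (hd : 0 < d)
    (ψ : Fin m → OrthonormalBasis (Fin d) ℂ (EuclideanSpace ℂ (Fin d)))
    (G : SimpleGraph (Fin m × Fin d))
    (hG : ∀ v w, G.Adj v w ↔ v ≠ w ∧ ⟪ψ v.1 v.2, ψ w.1 w.2⟫_ℂ ≠ 0)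
    (hconn : G.Connected)
    (ρ : Matrix (Fin d) (Fin d) ℂ) (hρ : ρ.PosSemidef) (htr : ρ.trace = 1)
    (σ : Fin m → Fin d → Matrix (Fin d) (Fin d) ℂ)
    (hσ : ∀ x k, (σ x k).PosSemidef)
    (hsum : ∀ x, ∑ k, σ x k = ρ)
    (hpass : ∀ x, ∑ k, dotProduct (star (fun i => ψ x k i))
      ((σ x k).mulVec (fun i => ψ x k i)) = 1) :
    ρ = ((d : ℂ))⁻¹ • (1 : Matrix (Fin d) (Fin d) ℂ) ∧
      ∀ x k, σ x k = ((d : ℂ))⁻¹ •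
        Matrix.vecMulVec (fun i => ψ x k i) (star (fun i => ψ x k i)) := by
  classical
  have horth : ∀ x (k l : Fin d),
      star (fun i => ψ x k i) ⬝ᵥ (fun i => ψ x l i) = if k = l then 1 else 0 := by
    intro x k l
    have := orthonormal_iff_ite.mp (ψ x).orthonormal k l
    simpa [PiLp.inner_apply, RCLike.inner_apply, dotProduct, mul_comm] using this
  -- quadratic forms
  set q : Fin m → Fin d → Fin d → ℂ :=
    fun x k l => star (fun i => ψ x l i) ⬝ᵥ (σ x k) *ᵥ (fun i => ψ x l i) with hq
  have hqnn : ∀ x k l, 0 ≤ q x k l := fun x k l => (hσ x k).dotProduct_mulVec_nonneg _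
  have htrsum : ∀ x, ∑ k, ∑ l, q x k l = 1 := by
    intro x
    have e : ∀ k : Fin d, ∑ l, q x k l = (σ x k).trace :=
      fun k => (trace_eq_sum (ψ x) _).symm
    rw [Finset.sum_congr rfl fun k _ => e k, ← Matrix.trace_sum, hsum x, htr]
  have hdiag : ∀ x, ∑ k, q x k k = 1 := fun x => hpass x
  have hoff : ∀ x (k l : Fin d), l ≠ k → q x k l = 0 := by
    intro x
    have h0 : ∑ k, ∑ l ∈ Finset.univ.erase k, q x k l = 0 := by
      have e : ∀ k : Fin d, ∑ l, q x k l = q x k k + ∑ l ∈ Finset.univ.erase k, q x k l :=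
        fun k => (Finset.add_sum_erase _ _ (Finset.mem_univ k)).symm
      have h1 := htrsum x
      rw [Finset.sum_congr rfl fun k _ => e k, Finset.sum_add_distrib, hdiag x] at h1
      linear_combination h1
    intro k l hlk
    have h1 := (Finset.sum_eq_zero_iff_of_nonneg
      (fun k _ => Finset.sum_nonneg (fun l _ => hqnn x k l))).mp h0
    have h2 := (Finset.sum_eq_zero_iff_of_nonneg
      (fun l _ => hqnn x k l)).mp (h1 k (Finset.mem_univ k))
    exact h2 l (Finset.mem_erase.mpr ⟨hlk, Finset.mem_univ l⟩)
  have hker : ∀ x (k l : Fin d), l ≠ k → (σ x k) *ᵥ (fun i => ψ x l i) = 0 :=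
    fun x k l h => ((hσ x k).dotProduct_mulVec_zero_iff _).mp (hoff x k l h)
  set c : Fin m → Fin d → ℂ := fun x k => q x k k with hc
  have hcnn : ∀ x k, 0 ≤ c x k := fun x k => hqnn x k k
  -- structure of σ
  have hσeq : ∀ x k, σ x k
      = c x k • Matrix.vecMulVec (fun i => ψ x k i) (star (fun i => ψ x k i)) := by
    intro x k
    apply eq_of_conj (ψ x)
    ext l l'
    rw [conj_entry, conj_entry]
    have hrhs : star (fun i => ψ x l i) ⬝ᵥ
        (c x k • Matrix.vecMulVec (fun i => ψ x k i) (star (fun i => ψ x k i))) *ᵥ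
          (fun i => ψ x l' i)
        = c x k * ((if k = l' then 1 else 0) * (if l = k then 1 else 0)) := by
      rw [Matrix.smul_mulVec, vecMulVec_mulVec, horth x k l']
      simp only [dotProduct_smul, smul_eq_mul, horth x l k]
      try ring
    rw [hrhs]
    rcases eq_or_ne l' k with h' | h'
    · subst h'
      rcases eq_or_ne l l' with h | h
      · subst h
        simp [hc, hq]
      · have h0 := hker x l' l h
        rw [herm_dot (hσ x l').1, h0]
        rw [dotProduct_zero, if_neg h, if_pos rfl]
        simp
    · have h0 := hker x k l' h'
      rw [h0, dotProduct_zero, if_neg (Ne.symm h')]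
      ring
  -- eigenvector property
  have hρv : ∀ x k, ρ *ᵥ (fun i => ψ x k i) = c x k • (fun i => ψ x k i) := by
    intro x k
    rw [← hsum x, matSum_mulVec, Finset.sum_eq_single k]
    · rw [hσeq x k, Matrix.smul_mulVec, vecMulVec_mulVec, horth x k k]
      simp
    · intro l _ hl
      exact hker x l k (Ne.symm hl)
    · intro h; exact absurd (Finset.mem_univ k) h
  -- adjacency implies equal eigenvalue
  have hadj : ∀ a b : Fin m × Fin d, G.Adj a b → c a.1 a.2 = c b.1 b.2 := by
    intro a b hab
    obtain ⟨hne, hip⟩ := (hG a b).mp hab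
    have hip' : star (fun i => ψ a.1 a.2 i) ⬝ᵥ (fun i => ψ b.1 b.2 i) ≠ 0 := by
      simpa [PiLp.inner_apply, RCLike.inner_apply, dotProduct, mul_comm] using hip
    have h1 : star (fun i => ψ a.1 a.2 i) ⬝ᵥ ρ *ᵥ (fun i => ψ b.1 b.2 i)
        = c b.1 b.2 * (star (fun i => ψ a.1 a.2 i) ⬝ᵥ (fun i => ψ b.1 b.2 i)) := by
      rw [hρv]
      simp [dotProduct_smul, smul_eq_mul]
    have h2 : star (fun i => ψ a.1 a.2 i) ⬝ᵥ ρ *ᵥ (fun i => ψ b.1 b.2 i)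
        = star (c a.1 a.2) * (star (fun i => ψ a.1 a.2 i) ⬝ᵥ (fun i => ψ b.1 b.2 i)) := by
      rw [herm_dot hρ.1, hρv]
      rw [dotProduct_smul, star_smul, smul_eq_mul]
      congr 1
      rw [← Matrix.star_dotProduct]
    have hre : star (c a.1 a.2) = c a.1 a.2 := by
      have h := hcnn a.1 a.2
      have : (c a.1 a.2).im = 0 := by
        rw [Complex.le_def] at h
        simpa using h.2.symm
      rw [RCLike.star_def]
      exact Complex.conj_eq_iff_im.mpr this
    rw [hre] at h2
    exact mul_right_cancel₀ hip' (h2.symm.trans h1)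
  -- connectivity: c is constant
  have hconst : ∀ a b : Fin m × Fin d, c a.1 a.2 = c b.1 b.2 := by
    intro a b
    obtain ⟨p⟩ := hconn a b
    induction p with
    | nil => rfl
    | cons h p ih => exact (hadj _ _ h).trans ih
  obtain ⟨a0⟩ := hconn.nonempty
  have hd0 : (d : ℂ) ≠ 0 := Nat.cast_ne_zero.mpr hd.ne'
  have hcval : ∀ x k, c x k = ((d : ℂ))⁻¹ := by
    intro x k
    have hsum1 : (d : ℂ) * c a0.1 a0.2 = 1 := by
      have := hdiag a0.1
      rw [Finset.sum_congr rfl (fun l _ => hconst (a0.1, l) a0)] at this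
      simpa [Finset.sum_const, mul_comm] using this
    have : c a0.1 a0.2 = ((d : ℂ))⁻¹ := by
      field_simp at hsum1 ⊢
      linear_combination hsum1
    rw [hconst (x, k) a0]
    exact this
  have hσfin : ∀ x k, σ x k = ((d : ℂ))⁻¹ •
      Matrix.vecMulVec (fun i => ψ x k i) (star (fun i => ψ x k i)) := by
    intro x k
    rw [hσeq x k, hcval x k]
  refine ⟨?_, hσfin⟩
  rw [← hsum a0.1, Finset.sum_congr rfl (fun k _ => hσfin a0.1 k), ← Finset.smul_sum,
    sum_proj (ψ a0.1)]
end

section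
/- Let B_x = {ψ_{xk}} (x = 1,...,m) be orthonormal bases of ℂ^d whose transition graph has connected components G_1,...,G_g. For each component a and each x, let B_x^a ⊆ B_x be the basis vectors whose vertices lie in G_a, and let P_a^x = Σ_{ψ ∈ B_x^a} |ψ⟩⟨ψ|. Then P_a^x is independent of x, i.e., P_a^x = P_a^y for all x, y; in particular the component subspaces span(B_x^a) coincide for all x. -/
open scoped InnerProductSpace

open scoped Classical in
theorem stmt_18 (d m : ℕ)
    (B : Fin m → OrthonormalBasis (Fin d) ℂ (EuclideanSpace ℂ (Fin d)))
    (G : SimpleGraph (Fin m × Fin d))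
    (hG : ∀ v w, G.Adj v w ↔ v ≠ w ∧ ⟪B v.1 v.2, B w.1 w.2⟫_ℂ ≠ 0) :
    ∀ (a : G.ConnectedComponent) (x y : Fin m),
      (∑ k, if G.connectedComponentMk (x, k) = a then
          Matrix.vecMulVec (fun i => B x k i) (star (fun i => B x k i)) else 0) =
        ∑ k, if G.connectedComponentMk (y, k) = a then
          Matrix.vecMulVec (fun i => B y k i) (star (fun i => B y k i)) else 0 := by
  -- vectors in different components are orthogonal
  have orth : ∀ (x : Fin m) (k : Fin d) (y : Fin m) (l : Fin d),
      G.connectedComponentMk (x, k) ≠ G.connectedComponentMk (y, l) →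
      ⟪B x k, B y l⟫_ℂ = 0 := by
    intro x k y l hne
    by_contra h0
    rcases eq_or_ne (x, k) (y, l) with h | h
    · exact hne (by rw [h])
    · exact hne (SimpleGraph.ConnectedComponent.connectedComponentMk_eq_of_adj ((hG _ _).mpr ⟨h, h0⟩))
  -- sum of matrices acts as sum of mulVec
  have sum_mv : ∀ (F : Fin d → Matrix (Fin d) (Fin d) ℂ) (v : Fin d → ℂ),
      (∑ k, F k).mulVec v = ∑ k, (F k).mulVec v := by
    intro F v
    funext i
    simp [Matrix.mulVec, dotProduct, Finset.sum_apply, Matrix.sum_apply, Finset.sum_mul]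
    rw [Finset.sum_comm]
  -- rank-one matrix action
  have rk1 : ∀ (x : Fin m) (k : Fin d) (y : Fin m) (l : Fin d),
      (Matrix.vecMulVec (fun i => B x k i) (star (fun i => B x k i))).mulVec
        (fun i => B y l i) = fun i => ⟪B x k, B y l⟫_ℂ * B x k i := by
    intro x k y l
    funext i
    simp only [Matrix.mulVec, Matrix.vecMulVec_apply, dotProduct, Pi.star_apply,
      PiLp.inner_apply, RCLike.inner_apply, RCLike.star_def, Finset.sum_mul]
    exact Finset.sum_congr rfl fun j _ => by ring
  -- key: action of the component projector from basis x on a vector of basis y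
  have key : ∀ (a : G.ConnectedComponent) (x y : Fin m) (l : Fin d),
      (∑ k, if G.connectedComponentMk (x, k) = a then
          Matrix.vecMulVec (fun i => B x k i) (star (fun i => B x k i)) else 0).mulVec
        (fun i => B y l i)
      = if G.connectedComponentMk (y, l) = a then (fun i => B y l i) else 0 := by
    intro a x y l
    rw [sum_mv]
    have hterm : ∀ k,
        (if G.connectedComponentMk (x, k) = a then
            Matrix.vecMulVec (fun i => B x k i) (star (fun i => B x k i)) else 0).mulVec
          (fun i => B y l i)
        = (if G.connectedComponentMk (x, k) = a then
            (fun i => ⟪B x k, B y l⟫_ℂ * B x k i) else 0) := by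
      intro k
      split
      · exact rk1 x k y l
      · exact Matrix.zero_mulVec _
    simp only [hterm]
    by_cases ha : G.connectedComponentMk (y, l) = a
    · rw [if_pos ha]
      have h1 : ∀ k, (if G.connectedComponentMk (x, k) = a then
          (fun i => ⟪B x k, B y l⟫_ℂ * B x k i) else 0)
          = fun i => ⟪B x k, B y l⟫_ℂ * B x k i := by
        intro k
        split
        · rfl
        · next h =>
          have h0 : ⟪B x k, B y l⟫_ℂ = 0 := orth x k y l (by rw [ha]; exact h)
          funext i
          simp [h0]
      simp only [h1]
      have h2 := (B x).sum_repr' (B y l)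
      have h3 := congrArg (WithLp.linearEquiv 2 ℂ (Fin d → ℂ)) h2
      rw [map_sum] at h3
      simp only [map_smul, WithLp.linearEquiv_apply] at h3
      funext i
      have h4 := congrFun h3 i
      simpa [Finset.sum_apply, WithLp.equiv, smul_eq_mul] using h4
    · rw [if_neg ha]
      have h1 : ∀ k, (if G.connectedComponentMk (x, k) = a then
          (fun i => ⟪B x k, B y l⟫_ℂ * B x k i) else 0) = (0 : Fin d → ℂ) := by
        intro k
        split
        · next h =>
          have h0 : ⟪B x k, B y l⟫_ℂ = 0 := orth x k y l (by rw [h]; exact fun hh => ha hh.symm)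
          funext i
          simp [h0]
        · rfl
      simp only [h1]
      simp
  intro a x y
  apply Matrix.toLin'.injective
  apply Module.Basis.ext ((B y).toBasis.map (WithLp.linearEquiv 2 ℂ (Fin d → ℂ)))
  intro l
  have hb : ((B y).toBasis.map (WithLp.linearEquiv 2 ℂ (Fin d → ℂ))) l
      = fun i => B y l i := by
    simp [Module.Basis.map_apply]
  rw [hb, Matrix.toLin'_apply, Matrix.toLin'_apply, key a x y l, key a y y l]
end
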